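/- Let f : ℝⁿ → ℝ be twice continuously differentiable, let x̂ satisfy ∇f(x̂) = 0, and suppose λ_min(∇²f(x + t(x̂ − x) + x − x)) ≥ −α/2 for all t ∈ [0,1] along the segment from x̂ to x (i.e., the Hessian has smallest eigenvalue at least −α/2 on the segment). If additionally f(x) ≥ f(x̂) + (α/2)‖x − x̂‖², then ⟨∇f(x), x − x̂⟩ ≥ (α/4)‖x − x̂‖², and consequently ‖x − x̂‖ ≤ (4/α)‖∇f(x)‖. -/

import Mathlib

open RealInnerProductSpace
open Set

theorem stmt5 {n : ℕ} (f : EuclideanSpace ℝ (Fin n) → ℝ) (α : ℝ)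
    (x xhat : EuclideanSpace ℝ (Fin n))
    (hα : 0 < α) (hf : ContDiff ℝ 2 f)
    (hcrit : gradient f xhat = 0)
    (hHess : ∀ z ∈ segment ℝ xhat x, ∀ v,
      -(α / 2) * ‖v‖ ^ 2 ≤ ⟪v, (fderiv ℝ (gradient f) z) v⟫)
    (hgrowth : f xhat + α / 2 * ‖x - xhat‖ ^ 2 ≤ f x) :
    α / 4 * ‖x - xhat‖ ^ 2 ≤ ⟪gradient f x, x - xhat⟫ ∧
      ‖x - xhat‖ ≤ 4 / α * ‖gradient f x‖ := by
  set v : EuclideanSpace ℝ (Fin n) := x - xhat with hv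
  set L : ℝ → EuclideanSpace ℝ (Fin n) := fun t => xhat + t • v with hLdef
  have hL : ∀ t : ℝ, HasDerivAt L v t := by
    intro t
    simpa [hLdef] using ((hasDerivAt_id t).smul_const v).const_add xhat
  have hLseg : ∀ t ∈ Icc (0:ℝ) 1, L t ∈ segment ℝ xhat x := by
    intro t ht
    rw [segment_eq_image']
    exact ⟨t, ht, rfl⟩
  have hfd : Differentiable ℝ f := hf.differentiable (by norm_num)
  -- gradient is C¹
  have hgradc : ContDiff ℝ 1 (gradient f) := by
    have h1 : ContDiff ℝ 1 (fderiv ℝ f) := hf.fderiv_right (by norm_num)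
    have : gradient f = fun z => (InnerProductSpace.toDual ℝ (EuclideanSpace ℝ (Fin n))).symm (fderiv ℝ f z) := rfl
    rw [this]
    exact (InnerProductSpace.toDual ℝ (EuclideanSpace ℝ (Fin n))).symm.toContinuousLinearEquiv.contDiff.comp h1
  have hgradd : Differentiable ℝ (gradient f) := hgradc.differentiable (by norm_num)
  -- inner product relation
  have hinner : ∀ z : EuclideanSpace ℝ (Fin n), fderiv ℝ f z v = ⟪gradient f z, v⟫ := by
    intro z
    have : fderiv ℝ f z = InnerProductSpace.toDual ℝ (EuclideanSpace ℝ (Fin n)) (gradient f z) := by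
      simp [gradient]
    rw [this, InnerProductSpace.toDual_apply_apply]
  -- first derivative of g₀ t = f (L t)
  have hg1 : ∀ t : ℝ, HasDerivAt (fun t => f (L t)) ⟪gradient f (L t), v⟫ t := by
    intro t
    have := (hfd (L t)).hasFDerivAt.comp_hasDerivAt t (hL t)
    rwa [hinner (L t)] at this
  -- derivative of t ↦ ⟪gradient f (L t), v⟫
  have hg2 : ∀ t : ℝ, HasDerivAt (fun t => ⟪gradient f (L t), v⟫)
      ⟪(fderiv ℝ (gradient f) (L t)) v, v⟫ t := by
    intro t
    have h1 : HasDerivAt (fun t => gradient f (L t)) ((fderiv ℝ (gradient f) (L t)) v) t :=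
      (hgradd (L t)).hasFDerivAt.comp_hasDerivAt t (hL t)
    have := h1.inner ℝ (hasDerivAt_const t v)
    simpa using this
  -- define g and G
  set g : ℝ → ℝ := fun t => f (L t) + α / 4 * t ^ 2 * ‖v‖ ^ 2 with hgdef
  set G : ℝ → ℝ := fun t => ⟪gradient f (L t), v⟫ + α / 2 * t * ‖v‖ ^ 2 with hGdef
  have hgG : ∀ t : ℝ, HasDerivAt g (G t) t := by
    intro t
    have h2 : HasDerivAt (fun t : ℝ => α / 4 * t ^ 2 * ‖v‖ ^ 2) (α / 2 * t * ‖v‖ ^ 2) t := by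
      have := ((hasDerivAt_pow 2 t).const_mul (α / 4)).mul_const (‖v‖ ^ 2)
      refine this.congr_deriv ?_
      ring
    exact (hg1 t).add h2
  have hGderiv : ∀ t : ℝ, HasDerivAt G (⟪(fderiv ℝ (gradient f) (L t)) v, v⟫ + α / 2 * ‖v‖ ^ 2) t := by
    intro t
    have h2 : HasDerivAt (fun t : ℝ => α / 2 * t * ‖v‖ ^ 2) (α / 2 * ‖v‖ ^ 2) t := by
      have := ((hasDerivAt_id t).const_mul (α / 2)).mul_const (‖v‖ ^ 2)
      simpa using this
    exact (hg2 t).add h2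
  have hGnonneg : ∀ t ∈ Icc (0:ℝ) 1, 0 ≤ ⟪(fderiv ℝ (gradient f) (L t)) v, v⟫ + α / 2 * ‖v‖ ^ 2 := by
    intro t ht
    have := hHess (L t) (hLseg t ht) v
    rw [real_inner_comm] at this
    nlinarith
  -- MVT: ∃ c ∈ Ioo 0 1, G c = g 1 - g 0
  obtain ⟨c, hc, hceq⟩ := exists_hasDerivAt_eq_slope g G one_pos
    (fun t _ => (hgG t).continuousAt.continuousWithinAt) (fun t ht => hgG t)
  -- MVT on [c, 1] for G
  obtain ⟨d, hd, hdeq⟩ := exists_hasDerivAt_eq_slope G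
    (fun t => ⟪(fderiv ℝ (gradient f) (L t)) v, v⟫ + α / 2 * ‖v‖ ^ 2) hc.2
    (fun t _ => (hGderiv t).continuousAt.continuousWithinAt) (fun t _ => hGderiv t)
  have hdIcc : d ∈ Icc (0:ℝ) 1 := ⟨le_of_lt (lt_trans hc.1 hd.1), le_of_lt hd.2⟩
  have hG1c : G c ≤ G 1 := by
    have hc1 : (0:ℝ) < 1 - c := by linarith [hc.2]
    have h0' : 0 ≤ (G 1 - G c) / (1 - c) := by rw [← hdeq]; exact hGnonneg d hdIcc
    have : (0:ℝ) ≤ G 1 - G c := by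
      calc (0:ℝ) ≤ (1 - c) * ((G 1 - G c) / (1 - c)) := mul_nonneg hc1.le h0'
        _ = G 1 - G c := by field_simp
    linarith
  -- compute g 1, g 0, G 1
  have hL1 : L 1 = x := by simp [hLdef, hv]
  have hL0 : L 0 = xhat := by simp [hLdef]
  have hGc : G c = g 1 - g 0 := by rw [hceq]; simp
  have hkey : α / 4 * ‖v‖ ^ 2 ≤ ⟪gradient f x, v⟫ := by
    have e1 : G 1 = ⟪gradient f x, v⟫ + α / 2 * ‖v‖ ^ 2 := by
      simp [hGdef, hL1]
    have e2 : g 1 - g 0 = f x - f xhat + α / 4 * ‖v‖ ^ 2 := by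
      simp [hgdef, hL1, hL0]; ring
    have := hG1c
    rw [hGc, e1, e2] at this
    nlinarith
  refine ⟨hkey, ?_⟩
  rcases eq_or_ne ‖v‖ 0 with h0 | h0
  · rw [h0]
    positivity
  · have hvpos : 0 < ‖v‖ := lt_of_le_of_ne (norm_nonneg _) (Ne.symm h0)
    have hcs : ⟪gradient f x, v⟫ ≤ ‖gradient f x‖ * ‖v‖ := real_inner_le_norm _ _
    have : α / 4 * ‖v‖ ^ 2 ≤ ‖gradient f x‖ * ‖v‖ := le_trans hkey hcs
    rw [div_mul_eq_mul_div, le_div_iff₀ hα]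
    nlinarith
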